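/- Let w = ((i_1,ε_1),…,(i_m,ε_m)) be a signed word over n letters and fix indices i ≠ j in {1,…,n}. Suppose the signed count of occurrences of the letter i in w is zero (i.e. Σ_{v : i_v = i} ε_v = 0) and likewise the signed count of occurrences of the letter j is zero. If e_{ij}(w) = A, then m ≥ 2·⌈2·√|A|⌉, where ⌈−⌉ is the ceiling function. -/

import Mathlib

/-- `eij w i j` is the signed count of occurrences of the letter `i` appearing
(weakly) before an occurrence of the letter `j` in the signed word `w`:
`∑_{1 ≤ u ≤ v ≤ m} δ(i_u, i) · δ(i_v, j) · ε_u · ε_v`. -/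
def eij (w : List (ℕ × ℤ)) (i j : ℕ) : ℤ :=
  ∑ v : Fin w.length, ∑ u : Fin w.length,
    if u ≤ v ∧ (w.get u).1 = i ∧ (w.get v).1 = j
    then (w.get u).2 * (w.get v).2 else 0

/-- The signed count of occurrences of the letter `i` in the signed word `w`:
`∑_{v : i_v = i} ε_v`. -/
def signedCount (w : List (ℕ × ℤ)) (i : ℕ) : ℤ :=
  ∑ v : Fin w.length, if (w.get v).1 = i then (w.get v).2 else 0

/-- Any interval sum of a function whose total sum over `range m` vanishes is
bounded by the sum of positive parts. -/
lemma abs_Ico_sum_le (m t : ℕ) (f : ℕ → ℤ)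
    (hf : ∑ u ∈ Finset.range m, f u = 0) (htm : t ≤ m) (s : ℕ) :
    |∑ u ∈ Finset.Ico s t, f u| ≤ ∑ u ∈ Finset.range m, max (f u) 0 := by
  have hsub : Finset.Ico s t ⊆ Finset.range m := by
    intro x hx
    simp only [Finset.mem_Ico, Finset.mem_range] at *
    omega
  have hpos : ∀ (s' : Finset ℕ), s' ⊆ Finset.range m →
      ∑ u ∈ s', f u ≤ ∑ u ∈ Finset.range m, max (f u) 0 := by
    intro s' hs'
    calc ∑ u ∈ s', f u ≤ ∑ u ∈ s', max (f u) 0 :=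
          Finset.sum_le_sum fun u _ => le_max_left _ _
      _ ≤ ∑ u ∈ Finset.range m, max (f u) 0 :=
          Finset.sum_le_sum_of_subset_of_nonneg hs' (fun u _ _ => le_max_right _ _)
  have hsd := Finset.sum_sdiff (f := f) hsub
  rw [hf] at hsd
  have h2 := hpos _ (Finset.sdiff_subset (s := Finset.range m) (t := Finset.Ico s t))
  have h1 := hpos _ hsub
  rw [abs_le]
  constructor <;> linarith

/-- The key combinatorial bound: if both `f` and `g` have vanishing total sum
over `range m`, then the "linking number" `∑_v g v · (∑_{u ≤ v} f u)` is bounded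
in absolute value by the product of the sums of positive parts. -/
lemma key_bound (m : ℕ) (f g : ℕ → ℤ)
    (hf : ∑ u ∈ Finset.range m, f u = 0)
    (hg : ∑ v ∈ Finset.range m, g v = 0) :
    |∑ v ∈ Finset.range m, g v * (∑ u ∈ Finset.range (v + 1), f u)| ≤
      (∑ v ∈ Finset.range m, max (g v) 0) * (∑ u ∈ Finset.range m, max (f u) 0) := by
  classical
  set p := ∑ u ∈ Finset.range m, max (f u) 0 with hp
  set q := ∑ v ∈ Finset.range m, max (g v) 0 with hq
  set S : ℕ → ℤ := fun v => ∑ u ∈ Finset.range (v + 1), f u with hS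
  have hq0 : 0 ≤ q := Finset.sum_nonneg fun v _ => le_max_right _ _
  have hp0 : 0 ≤ p := Finset.sum_nonneg fun v _ => le_max_right _ _
  have hdiff : ∀ v v', v < m → v' < m → |S v - S v'| ≤ p := by
    have aux : ∀ v v', v' ≤ v → v < m → |S v - S v'| ≤ p := by
      intro v v' hle hvm
      have hEq : S v - S v' = ∑ u ∈ Finset.Ico (v' + 1) (v + 1), f u := by
        rw [Finset.sum_Ico_eq_sub f (by omega : v' + 1 ≤ v + 1)]
      rw [hEq]
      exact abs_Ico_sum_le m (v + 1) f hf (by omega) _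
    intro v v' hv hv'
    rcases le_total v' v with h | h
    · exact aux v v' h hv
    · rw [abs_sub_comm]
      exact aux v' v h hv'
  set T := (Finset.range m).filter (fun v => g v ≠ 0) with hT
  by_cases hTne : T.Nonempty
  · obtain ⟨v₀, hv₀, hmin⟩ := Finset.exists_min_image T S hTne
    obtain ⟨v₁, hv₁, hmax⟩ := Finset.exists_max_image T S hTne
    have hv₀m : v₀ < m := Finset.mem_range.mp (Finset.mem_filter.mp hv₀).1
    have hv₁m : v₁ < m := Finset.mem_range.mp (Finset.mem_filter.mp hv₁).1
    have hshift : ∀ c : ℤ, ∑ v ∈ Finset.range m, g v * S v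
        = ∑ v ∈ Finset.range m, g v * (S v - c) := by
      intro c
      have : ∑ v ∈ Finset.range m, g v * (S v - c)
          = ∑ v ∈ Finset.range m, g v * S v - (∑ v ∈ Finset.range m, g v) * c := by
        rw [Finset.sum_mul, ← Finset.sum_sub_distrib]
        exact Finset.sum_congr rfl fun v _ => by ring
      rw [this, hg, zero_mul, sub_zero]
    rw [abs_le]
    constructor
    · -- lower bound using the maximum
      rw [hshift (S v₁)]
      have hpt : ∀ v ∈ Finset.range m, -(max (g v) 0 * p) ≤ g v * (S v - S v₁) := by
        intro v hv
        have hvm := Finset.mem_range.mp hv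
        by_cases hgv : g v = 0
        · simp [hgv]
        · have hvT : v ∈ T := Finset.mem_filter.mpr ⟨hv, hgv⟩
          have h1 : S v ≤ S v₁ := hmax v hvT
          have h2 := abs_le.mp (hdiff v v₁ hvm hv₁m)
          rcases lt_or_gt_of_ne hgv with hneg | hpos
          · have hm0 : max (g v) 0 = 0 := max_eq_right hneg.le
            rw [hm0]
            nlinarith
          · have hm0 : max (g v) 0 = g v := max_eq_left hpos.le
            rw [hm0]
            nlinarith
      have hsum_eq : ∑ v ∈ Finset.range m, -(max (g v) 0 * p) = -(q * p) := by
        rw [Finset.sum_neg_distrib, ← Finset.sum_mul, ← hq]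
      calc -(q * p) = ∑ v ∈ Finset.range m, -(max (g v) 0 * p) := hsum_eq.symm
        _ ≤ ∑ v ∈ Finset.range m, g v * (S v - S v₁) := Finset.sum_le_sum hpt
    · -- upper bound using the minimum
      rw [hshift (S v₀)]
      have hpt : ∀ v ∈ Finset.range m, g v * (S v - S v₀) ≤ max (g v) 0 * p := by
        intro v hv
        have hvm := Finset.mem_range.mp hv
        by_cases hgv : g v = 0
        · simp [hgv]
        · have hvT : v ∈ T := Finset.mem_filter.mpr ⟨hv, hgv⟩
          have h1 : S v₀ ≤ S v := hmin v hvT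
          have h2 := abs_le.mp (hdiff v v₀ hvm hv₀m)
          rcases lt_or_gt_of_ne hgv with hneg | hpos
          · have hm0 : max (g v) 0 = 0 := max_eq_right hneg.le
            rw [hm0]
            nlinarith
          · have hm0 : max (g v) 0 = g v := max_eq_left hpos.le
            rw [hm0]
            nlinarith
      calc ∑ v ∈ Finset.range m, g v * (S v - S v₀)
            ≤ ∑ v ∈ Finset.range m, max (g v) 0 * p := Finset.sum_le_sum hpt
        _ = q * p := by rw [← Finset.sum_mul]
  · have hzero : ∑ v ∈ Finset.range m, g v * S v = 0 := by
      apply Finset.sum_eq_zero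
      intro v hv
      have : g v = 0 := by
        by_contra h
        exact hTne ⟨v, Finset.mem_filter.mpr ⟨hv, h⟩⟩
      simp [this]
    rw [hzero]
    simpa using mul_nonneg hq0 hp0

/-- Corollary 4.2. If `w` is a signed word of length `m` over `n`
letters, `i ≠ j` are letters whose signed counts of occurrences in `w` both vanish,
and `e_{ij}(w) = A`, then `m ≥ 2⌈2√|A|⌉`. -/
theorem length_ge_of_eij (n : ℕ) (w : List (ℕ × ℤ))
    (hw : ∀ p ∈ w, p.1 ∈ Finset.Icc 1 n ∧ (p.2 = 1 ∨ p.2 = -1))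
    (i j : ℕ) (hi : i ∈ Finset.Icc 1 n) (hj : j ∈ Finset.Icc 1 n) (hij : i ≠ j)
    (hci : signedCount w i = 0) (hcj : signedCount w j = 0)
    (A : ℤ) (hA : eij w i j = A) :
    (w.length : ℤ) ≥ 2 * ⌈2 * Real.sqrt |(A : ℝ)|⌉ := by
  classical
  set m := w.length with hm
  set f : ℕ → ℤ := fun u =>
    if h : u < m then (if (w.get ⟨u, h⟩).1 = i then (w.get ⟨u, h⟩).2 else 0) else 0 with hfdef
  set g : ℕ → ℤ := fun u =>
    if h : u < m then (if (w.get ⟨u, h⟩).1 = j then (w.get ⟨u, h⟩).2 else 0) else 0 with hgdef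
  have hfsum : ∑ u ∈ Finset.range m, f u = 0 := by
    rw [← Fin.sum_univ_eq_sum_range f m, ← hci]
    unfold signedCount
    apply Finset.sum_congr rfl
    intro v _
    simp [hfdef, v.isLt]
  have hgsum : ∑ u ∈ Finset.range m, g u = 0 := by
    rw [← Fin.sum_univ_eq_sum_range g m, ← hcj]
    unfold signedCount
    apply Finset.sum_congr rfl
    intro v _
    simp [hgdef, v.isLt]
  have hA' : eij w i j = ∑ v ∈ Finset.range m, g v * (∑ u ∈ Finset.range (v + 1), f u) := by
    unfold eij
    rw [← Fin.sum_univ_eq_sum_range (fun vv => g vv * (∑ u ∈ Finset.range (vv + 1), f u)) m]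
    apply Finset.sum_congr rfl
    intro v _
    have step1 : ∀ u : Fin w.length,
        (if u ≤ v ∧ (w.get u).1 = i ∧ (w.get v).1 = j then (w.get u).2 * (w.get v).2 else 0)
        = g v.val * (if u.val ≤ v.val then f u.val else 0) := by
      intro u
      simp only [hfdef, hgdef]
      rw [dif_pos u.isLt, dif_pos v.isLt]
      simp only [Fin.eta, Fin.le_def]
      split_ifs <;> first | rfl | tauto | ring1
    calc (∑ u : Fin w.length,
            if u ≤ v ∧ (w.get u).1 = i ∧ (w.get v).1 = j then (w.get u).2 * (w.get v).2 else 0)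
        = ∑ u : Fin w.length, g v.val * (if u.val ≤ v.val then f u.val else 0) :=
          Finset.sum_congr rfl fun u _ => step1 u
      _ = g v.val * ∑ u : Fin w.length, (if u.val ≤ v.val then f u.val else 0) := by
          rw [Finset.mul_sum]
      _ = g v.val * ∑ u ∈ Finset.range m, (if u ≤ v.val then f u else 0) := by
          rw [Fin.sum_univ_eq_sum_range (fun u => if u ≤ v.val then f u else 0) m]
      _ = g v.val * ∑ u ∈ Finset.range (v.val + 1), f u := by
          congr 1
          rw [← Finset.sum_filter]
          apply Finset.sum_congr _ (fun x _ => rfl)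
          ext x
          simp only [Finset.mem_filter, Finset.mem_range]
          omega
  set P := ∑ u ∈ Finset.range m, max (f u) 0 with hP
  set Q := ∑ v ∈ Finset.range m, max (g v) 0 with hQ
  have hP0 : 0 ≤ P := Finset.sum_nonneg fun v _ => le_max_right _ _
  have hQ0 : 0 ≤ Q := Finset.sum_nonneg fun v _ => le_max_right _ _
  have hkey : |A| ≤ Q * P := by
    rw [← hA, hA']
    exact key_bound m f g hfsum hgsum
  -- length bound : 2Q + 2P ≤ m
  have hlen : 2 * Q + 2 * P ≤ (m : ℤ) := by
    have hpt : ∀ u ∈ Finset.range m,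
        (2 * max (g u) 0 - g u) + (2 * max (f u) 0 - f u) ≤ 1 := by
      intro u hu
      have hum : u < m := Finset.mem_range.mp hu
      simp only [hfdef, hgdef]
      rw [dif_pos hum, dif_pos hum]
      have hpw := hw (w.get ⟨u, hum⟩) (List.get_mem w ⟨u, hum⟩)
      obtain ⟨-, hε⟩ := hpw
      by_cases h1 : (w.get ⟨u, hum⟩).1 = i
      · have h2 : ¬ (w.get ⟨u, hum⟩).1 = j := by rw [h1]; exact hij
        rw [if_pos h1, if_neg h2]
        rcases hε with h | h <;> rw [h] <;> norm_num
      · by_cases h2 : (w.get ⟨u, hum⟩).1 = j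
        · rw [if_pos h2, if_neg h1]
          rcases hε with h | h <;> rw [h] <;> norm_num
        · rw [if_neg h1, if_neg h2]
          norm_num
    have hsum : ∑ u ∈ Finset.range m,
        ((2 * max (g u) 0 - g u) + (2 * max (f u) 0 - f u)) = 2 * Q + 2 * P := by
      rw [Finset.sum_add_distrib, Finset.sum_sub_distrib, Finset.sum_sub_distrib,
        hfsum, hgsum, ← Finset.mul_sum, ← Finset.mul_sum]
      ring
    calc 2 * Q + 2 * P
        = ∑ u ∈ Finset.range m, ((2 * max (g u) 0 - g u) + (2 * max (f u) 0 - f u)) :=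
          hsum.symm
      _ ≤ ∑ u ∈ Finset.range m, (1 : ℤ) := Finset.sum_le_sum hpt
      _ = (m : ℤ) := by simp
  -- final arithmetic
  have hceil : ⌈2 * Real.sqrt |(A : ℝ)|⌉ ≤ Q + P := by
    rw [Int.ceil_le]
    push_cast
    have hs0 : 0 ≤ Real.sqrt |(A : ℝ)| := Real.sqrt_nonneg _
    have hs2 : Real.sqrt |(A : ℝ)| ^ 2 = |(A : ℝ)| := Real.sq_sqrt (abs_nonneg _)
    have hAc : |(A : ℝ)| = ((|A| : ℤ) : ℝ) := by push_cast; ring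
    have h3 : |(A : ℝ)| ≤ (Q : ℝ) * (P : ℝ) := by
      rw [hAc]
      exact_mod_cast hkey
    have hQ0' : (0 : ℝ) ≤ (Q : ℝ) := by exact_mod_cast hQ0
    have hP0' : (0 : ℝ) ≤ (P : ℝ) := by exact_mod_cast hP0
    nlinarith [sq_nonneg ((Q : ℝ) - P), sq_nonneg (2 * Real.sqrt |(A : ℝ)| - ((Q : ℝ) + P)),
      sq_nonneg (2 * Real.sqrt |(A : ℝ)| + ((Q : ℝ) + P))]
  have : 2 * ⌈2 * Real.sqrt |(A : ℝ)|⌉ ≤ 2 * (Q + P) := by linarith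
  linarith
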